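/- Let k be a field, A a nonzero commutative k-algebra, and Γ a finite group of k-algebra automorphisms of A such that λ_Γ : A ⊗_k A → ∏_{γ∈Γ} A (with components a ⊗ b ↦ a·γ(b)) is an isomorphism. If B is a nonzero commutative k-algebra, α : A → B is a k-algebra homomorphism, and γ ∈ Γ satisfies α ∘ γ = α, then γ = id. -/

import Mathlib

open TensorProduct

/-- If `A` is quasi-Galois over the field `k` with finite group `Γ`
(i.e. `λ_Γ` is an isomorphism), `B` is a nonzero commutative `k`-algebra,
`α : A → B` a `k`-algebra homomorphism and `γ ∈ Γ` satisfies `α ∘ γ = α`,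
then `γ = id`. -/
theorem stmt_5 (k A B : Type) [Field k] [CommRing A] [Algebra k A] [Nontrivial A]
    [CommRing B] [Algebra k B] [Nontrivial B]
    (Γ : Subgroup (A ≃ₐ[k] A)) [Finite Γ]
    (lam : A ⊗[k] A →ₐ[k] (Γ → A))
    (hlam : lam = Pi.algHom k _ (fun γ : Γ =>
      Algebra.TensorProduct.productMap (AlgHom.id k A) (γ : A ≃ₐ[k] A).toAlgHom))
    (hbij : Function.Bijective lam)
    (α : A →ₐ[k] B) (γ : Γ)
    (hγ : ∀ a : A, α ((γ : A ≃ₐ[k] A) a) = α a) :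
    γ = 1 := by
  classical
  have key : ∀ t : A ⊗[k] A, α (lam t γ) = α (lam t 1) := by
    intro t
    induction t using TensorProduct.induction_on with
    | zero => simp
    | tmul a b =>
        subst hlam
        simp only [Pi.algHom_apply, Algebra.TensorProduct.productMap_apply_tmul,
          AlgHom.coe_id, id_eq, AlgEquiv.toAlgHom_eq_coe, AlgHom.coe_coe, map_mul, hγ]
        simp [Subgroup.coe_one]
        exact congrArg (α a * ·) (hγ b)
    | add x y hx hy => simp [map_add, Pi.add_apply, hx, hy]
  by_contra hne
  obtain ⟨t, ht⟩ := hbij.2 (Pi.single γ 1)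
  have h := key t
  rw [ht] at h
  rw [Pi.single_eq_same, Pi.single_eq_of_ne (Ne.symm hne)] at h
  simp only [map_one, map_zero] at h
  exact one_ne_zero h
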